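/- Let J be any coupling of probability measures P₀ and P₁ on ℝ with cdfs F₀, F₁, and suppose P₀ is atomless. Then for every t ∈ ℝ, J({(y₀, y₁) : y₁ − y₀ ≤ t}) ≥ sup_{z ∈ ℝ} max(F₁(z) − F₀(z − t), 0). -/

import Mathlib

open MeasureTheory Set Filter

/-- The cumulative distribution function of a measure on ℝ. -/
noncomputable def cdf (P : MeasureTheory.Measure ℝ) (y : ℝ) : ℝ := (P (Set.Iic y)).toReal

/-- The quantile function (generalized inverse cdf) of a measure on ℝ. -/
noncomputable def quantile (P : MeasureTheory.Measure ℝ) (u : ℝ) : ℝ :=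
  sInf {y : ℝ | u ≤ cdf P y}

/-- Makarov lower bound on the cdf of the treatment effect. -/
theorem treatment_effect_cdf_lower_bound
    (P0 P1 : Measure ℝ) [IsProbabilityMeasure P0] [IsProbabilityMeasure P1] [NullSingletonClass P0]
    (J : Measure (ℝ × ℝ)) [IsProbabilityMeasure J]
    (h0 : J.map Prod.fst = P0) (h1 : J.map Prod.snd = P1)
    (t : ℝ) :
    (⨆ z : ℝ, max (cdf P1 z - cdf P0 (z - t)) 0)
      ≤ (J {p : ℝ × ℝ | p.2 - p.1 ≤ t}).toReal := by
  set S : Set (ℝ × ℝ) := {p : ℝ × ℝ | p.2 - p.1 ≤ t} with hS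
  apply ciSup_le
  intro z
  have key : P1 (Iic z) ≤ J S + P0 (Iic (z - t)) := by
    rw [← h1, ← h0, Measure.map_apply measurable_snd measurableSet_Iic,
        Measure.map_apply measurable_fst measurableSet_Iic]
    calc J (Prod.snd ⁻¹' Iic z) ≤ J (S ∪ Prod.fst ⁻¹' Iic (z - t)) := by
          apply measure_mono
          intro p hp
          by_cases h : p.2 - p.1 ≤ t
          · exact Or.inl h
          · right
            simp only [mem_preimage, mem_Iic] at hp ⊢
            linarith [not_le.mp h]
      _ ≤ _ := measure_union_le _ _
  apply max_le
  · have h2 : (P1 (Iic z)).toReal ≤ (J S + P0 (Iic (z - t))).toReal :=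
      ENNReal.toReal_mono (by finiteness) key
    rw [ENNReal.toReal_add (measure_ne_top _ _) (measure_ne_top _ _)] at h2
    simp only [cdf]
    linarith
  · exact ENNReal.toReal_nonneg
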